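/- Let μ, ξ > 0 with 8μ ≠ ξ and 2μ ≠ ξ, and let ζ, ζᵢ be real. Then the function V(y) = (ζ/(8μ−ξ))·(2e^{2y} − (√ξ/√(2μ))·e^{√ξ·y/√(2μ)}) + (ζᵢ/(2μ−ξ))·((√(2μ)/√ξ)·e^{√ξ·y/√(2μ)} − e^y) satisfies the ODE 2μV''(y) − ξV(y) − 2ζe^{2y} + ζᵢe^y = 0 for all y < 0, the boundary condition 2μV'(0) = ζ, and V(y) → 0 as y → −∞. -/

import Mathlib

noncomputable def Vflat (μ ξ ζ ζi : ℝ) : ℝ → ℝ := fun y =>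
  ζ / (8 * μ - ξ) * (2 * Real.exp (2 * y)
      - Real.sqrt ξ / Real.sqrt (2 * μ) * Real.exp (Real.sqrt ξ * y / Real.sqrt (2 * μ)))
  + ζi / (2 * μ - ξ) * (Real.sqrt (2 * μ) / Real.sqrt ξ
      * Real.exp (Real.sqrt ξ * y / Real.sqrt (2 * μ)) - Real.exp y)

/-- The flat-front vertical velocity V solves 2μV'' − ξV − 2ζe^{2y} + ζᵢe^y = 0 for y < 0,
satisfies 2μV'(0) = ζ, and vanishes at −∞. -/
theorem Vflat_solves (μ ξ ζ ζi : ℝ) (hμ : 0 < μ) (hξ : 0 < ξ)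
    (h8 : 8 * μ ≠ ξ) (h2 : 2 * μ ≠ ξ) :
    (∀ y < (0 : ℝ),
      2 * μ * deriv (deriv (Vflat μ ξ ζ ζi)) y - ξ * Vflat μ ξ ζ ζi y
        - 2 * ζ * Real.exp (2 * y) + ζi * Real.exp y = 0) ∧
    2 * μ * deriv (Vflat μ ξ ζ ζi) 0 = ζ ∧
    Filter.Tendsto (Vflat μ ξ ζ ζi) Filter.atBot (nhds 0) := by
  have h2μ : (0:ℝ) < 2 * μ := by linarith
  set s2 := Real.sqrt (2 * μ) with hs2
  set sx := Real.sqrt ξ with hsx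
  have hs2pos : 0 < s2 := Real.sqrt_pos.mpr h2μ
  have hsxpos : 0 < sx := Real.sqrt_pos.mpr hξ
  set k := sx / s2 with hk
  have hkpos : 0 < k := div_pos hsxpos hs2pos
  have hk2 : 2 * μ * k ^ 2 = ξ := by
    have h1 : s2 ^ 2 = 2 * μ := Real.sq_sqrt h2μ.le
    have h2 : sx ^ 2 = ξ := Real.sq_sqrt hξ.le
    rw [hk, div_pow, h1, h2]
    field_simp
  have h8' : 8 * μ - ξ ≠ 0 := sub_ne_zero.mpr h8
  have h2' : 2 * μ - ξ ≠ 0 := sub_ne_zero.mpr h2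
  set A := ζ / (8 * μ - ξ) with hA
  set B := ζi / (2 * μ - ξ) with hB
  have hVeq : Vflat μ ξ ζ ζi = fun y =>
      A * (2 * Real.exp (2 * y) - k * Real.exp (k * y))
      + B * ((1 / k) * Real.exp (k * y) - Real.exp y) := by
    funext y
    have harg : sx * y / s2 = k * y := by rw [hk]; ring
    have hinv : s2 / sx = 1 / k := by rw [hk, one_div_div]
    simp only [Vflat, ← hs2, ← hsx, harg, ← hk, hinv, ← hA, ← hB]
  have e2 : ∀ y : ℝ, HasDerivAt (fun y => Real.exp (2 * y)) (2 * Real.exp (2 * y)) y :=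
    fun y => by simpa [mul_comm] using ((hasDerivAt_id y).const_mul 2).exp
  have ek : ∀ y : ℝ, HasDerivAt (fun y => Real.exp (k * y)) (k * Real.exp (k * y)) y :=
    fun y => by simpa [mul_comm] using ((hasDerivAt_id y).const_mul k).exp
  have hd1 : ∀ y : ℝ, HasDerivAt (Vflat μ ξ ζ ζi)
      (A * (4 * Real.exp (2 * y) - k ^ 2 * Real.exp (k * y))
        + B * (Real.exp (k * y) - Real.exp y)) y := by
    intro y
    rw [hVeq]
    have h1 := (((e2 y).const_mul 2).sub ((ek y).const_mul k)).const_mul A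
    have h2 := (((ek y).const_mul (1 / k)).sub (Real.hasDerivAt_exp y)).const_mul B
    have hkk : (1:ℝ)/k * (k * Real.exp (k * y)) = Real.exp (k * y) := by
      field_simp
    refine (h1.add h2).congr_deriv ?_
    rw [hkk]; ring
  have hD1 : deriv (Vflat μ ξ ζ ζi) = fun y =>
      A * (4 * Real.exp (2 * y) - k ^ 2 * Real.exp (k * y))
        + B * (Real.exp (k * y) - Real.exp y) := funext fun y => (hd1 y).deriv
  have hd2 : ∀ y : ℝ, HasDerivAt (deriv (Vflat μ ξ ζ ζi))
      (A * (8 * Real.exp (2 * y) - k ^ 3 * Real.exp (k * y))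
        + B * (k * Real.exp (k * y) - Real.exp y)) y := by
    intro y
    rw [hD1]
    have h1 := (((e2 y).const_mul 4).sub ((ek y).const_mul (k ^ 2))).const_mul A
    have h2 := ((ek y).sub (Real.hasDerivAt_exp y)).const_mul B
    refine (h1.add h2).congr_deriv ?_
    ring
  refine ⟨fun y _ => ?_, ?_, ?_⟩
  · rw [(hd2 y).deriv, hVeq]
    simp only
    rw [hA, hB, ← hk2]
    have h8'' : 8 * μ - 2 * μ * k ^ 2 ≠ 0 := by rw [hk2]; exact h8'
    have h2'' : 2 * μ - 2 * μ * k ^ 2 ≠ 0 := by rw [hk2]; exact h2'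
    have h8k : (8:ℝ) - 2 * k ^ 2 ≠ 0 := fun h => h8'' (by linear_combination μ * h)
    have h1k : (1:ℝ) - k ^ 2 ≠ 0 := fun h => h2'' (by linear_combination 2 * μ * h)
    field_simp
    ring
  · rw [hD1]
    simp only [mul_zero, Real.exp_zero, mul_one, sub_self, mul_zero, add_zero]
    rw [hA, ← hk2]
    have h8'' : 8 * μ - 2 * μ * k ^ 2 ≠ 0 := by rw [hk2]; exact h8'
    have h8k : (8:ℝ) - 2 * k ^ 2 ≠ 0 := fun h => h8'' (by linear_combination μ * h)
    field_simp
    ring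
  · rw [hVeq]
    have hk' : Filter.Tendsto (fun y : ℝ => k * y) Filter.atBot Filter.atBot := by
      exact Filter.tendsto_id.const_mul_atBot hkpos
    have h2' : Filter.Tendsto (fun y : ℝ => (2:ℝ) * y) Filter.atBot Filter.atBot := by
      exact Filter.tendsto_id.const_mul_atBot (by norm_num)
    have tek : Filter.Tendsto (fun y => Real.exp (k * y)) Filter.atBot (nhds 0) :=
      Real.tendsto_exp_atBot.comp hk'
    have te2 : Filter.Tendsto (fun y => Real.exp (2 * y)) Filter.atBot (nhds 0) :=
      Real.tendsto_exp_atBot.comp h2'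
    have te1 : Filter.Tendsto (fun y : ℝ => Real.exp y) Filter.atBot (nhds 0) :=
      Real.tendsto_exp_atBot
    have := (((te2.const_mul 2).sub (tek.const_mul k)).const_mul A).add
      (((tek.const_mul (1 / k)).sub te1).const_mul B)
    simpa using this
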